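/- For every real β > 0 and every ρ ∈ [0,1], the tanh-based Heaviside projection at threshold η = 1 satisfies h(ρ,β,1) = 1 − tanh(β(1−ρ))/tanh(β) ≤ ρ, with strict inequality whenever ρ ∈ (0,1), and with equality at ρ = 0 and ρ = 1. -/

import Mathlib

/-- The tanh-based Heaviside projection. -/
noncomputable def heavisideProj (ρ β η : ℝ) : ℝ :=
  (Real.tanh (β * η) + Real.tanh (β * (ρ - η))) /
    (Real.tanh (β * η) + Real.tanh (β * (1 - η)))

lemma tanh_pos_aux {x : ℝ} (hx : 0 < x) : 0 < Real.tanh x := by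
  rw [Real.tanh_eq_sinh_div_cosh]
  exact div_pos (by rwa [Real.sinh_pos_iff]) (Real.cosh_pos x)

lemma hasDerivAt_tanh_aux (x : ℝ) :
    HasDerivAt Real.tanh ((Real.cosh x ^ 2)⁻¹) x := by
  have h := (Real.hasDerivAt_sinh x).div (Real.hasDerivAt_cosh x)
    (ne_of_gt (Real.cosh_pos x))
  have heq : (Real.cosh x * Real.cosh x - Real.sinh x * Real.sinh x) / Real.cosh x ^ 2
      = (Real.cosh x ^ 2)⁻¹ := by
    rw [show Real.cosh x * Real.cosh x - Real.sinh x * Real.sinh x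
        = Real.cosh x ^ 2 - Real.sinh x ^ 2 by ring, Real.cosh_sq_sub_sinh_sq]
    simp
  have : (Real.sinh / Real.cosh) = Real.tanh := by
    funext y; simp [Real.tanh_eq_sinh_div_cosh]
  rw [this, heq] at h
  exact h

lemma deriv_tanh_aux : deriv Real.tanh = fun x => (Real.cosh x ^ 2)⁻¹ := by
  funext x; exact (hasDerivAt_tanh_aux x).deriv

lemma tanh_strictConcaveOn : StrictConcaveOn ℝ (Set.Ici (0:ℝ)) Real.tanh := by
  apply StrictAntiOn.strictConcaveOn_of_deriv (convex_Ici 0)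
  · exact ((Real.continuous_sinh.div Real.continuous_cosh
      (fun x => ne_of_gt (Real.cosh_pos x))).congr
      (fun x => (Real.tanh_eq_sinh_div_cosh x).symm)).continuousOn
  · intro a ha b hb hab
    rw [interior_Ici, Set.mem_Ioi] at ha hb
    rw [deriv_tanh_aux]
    have hca : 0 < Real.cosh a := Real.cosh_pos a
    have h : Real.cosh a < Real.cosh b := by
      rw [Real.cosh_lt_cosh, abs_of_pos ha, abs_of_pos hb]; exact hab
    exact inv_strictAnti₀ (by positivity) (by nlinarith)

lemma key_lt {β t : ℝ} (hβ : 0 < β) (ht : t ∈ Set.Ioo (0:ℝ) 1) :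
    t * Real.tanh β < Real.tanh (β * t) := by
  obtain ⟨ht0, ht1⟩ := ht
  have := tanh_strictConcaveOn.2 (Set.self_mem_Ici) (Set.mem_Ici.2 hβ.le)
    (ne_of_lt hβ) (by linarith : (0:ℝ) < 1 - t) ht0 (by ring)
  simp only [smul_eq_mul, mul_zero, Real.tanh_zero, zero_add, mul_comm t β] at this
  linarith

lemma key_le {β t : ℝ} (hβ : 0 < β) (ht : t ∈ Set.Icc (0:ℝ) 1) :
    t * Real.tanh β ≤ Real.tanh (β * t) := by
  obtain ⟨ht0, ht1⟩ := ht
  rcases eq_or_lt_of_le ht0 with h0 | h0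
  · simp [← h0]
  rcases eq_or_lt_of_le ht1 with h1 | h1
  · simp [h1]
  exact (key_lt hβ ⟨h0, h1⟩).le

theorem heaviside_eta_one (β ρ : ℝ) (hβ : 0 < β) (hρ : ρ ∈ Set.Icc (0:ℝ) 1) :
    heavisideProj ρ β 1 = 1 - Real.tanh (β * (1 - ρ)) / Real.tanh β ∧
      heavisideProj ρ β 1 ≤ ρ ∧
      (ρ ∈ Set.Ioo (0:ℝ) 1 → heavisideProj ρ β 1 < ρ) ∧
      heavisideProj 0 β 1 = 0 ∧
      heavisideProj 1 β 1 = 1 := by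
  have htb : 0 < Real.tanh β := tanh_pos_aux hβ
  have heq : ∀ r : ℝ, heavisideProj r β 1 = 1 - Real.tanh (β * (1 - r)) / Real.tanh β := by
    intro r
    have : β * (r - 1) = -(β * (1 - r)) := by ring
    rw [heavisideProj, this, Real.tanh_neg]
    simp only [mul_one, sub_self, mul_zero, Real.tanh_zero, add_zero]
    field_simp
    ring
  refine ⟨heq ρ, ?_, ?_, ?_, ?_⟩
  · rw [heq ρ]
    have h := key_le hβ (⟨by linarith [hρ.2], by linarith [hρ.1]⟩ :
      (1 - ρ) ∈ Set.Icc (0:ℝ) 1)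
    rw [sub_le_iff_le_add, ← sub_le_iff_le_add']
    rw [le_div_iff₀ htb]
    linarith
  · intro hρo
    rw [heq ρ]
    have h := key_lt hβ (⟨by linarith [hρo.2], by linarith [hρo.1]⟩ :
      (1 - ρ) ∈ Set.Ioo (0:ℝ) 1)
    rw [sub_lt_iff_lt_add, ← sub_lt_iff_lt_add']
    rw [lt_div_iff₀ htb]
    linarith
  · rw [heq 0]; simp [div_self (ne_of_gt htb)]
  · rw [heq 1]; simp
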